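/- arXiv:1604.02711 — 6 statements merged into one kernel-verified Lean document; each statement's English description precedes it below -/
import Mathlib

section
/- For every reachable vertex v with v ≠ s, the set of proper dominators of v (dominators of v other than v itself) is totally ordered by the dominance relation; in particular, if u and w both properly dominate v, then u dominates w or w dominates u. -/
variable {V : Type*}

/-- `p` is a path (walk) in the digraph `E` from `a` to `b`, given as its list of vertices. -/
def IsPath (E : V → V → Prop) (a b : V) (p : List V) : Prop :=
  p.Chain' E ∧ p.head? = some a ∧ p.getLast? = some b

/-- `v` is reachable from `s` in the digraph `E`. -/
def Reach (E : V → V → Prop) (s v : V) : Prop := ∃ p, IsPath E s v p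

/-- `w` dominates `v` in the flow graph `(E, s)`. -/
def Dom (E : V → V → Prop) (s w v : V) : Prop :=
  Reach E s v ∧ ∀ p, IsPath E s v p → w ∈ p

/-- `dv` is the immediate dominator of `v`: `dv ≠ v`, `dv` dominates `v`, and every
proper dominator of `v` dominates `dv`. -/
def IsIdom (E : V → V → Prop) (s dv v : V) : Prop :=
  dv ≠ v ∧ Dom E s dv v ∧ ∀ u, Dom E s u v → u ≠ v → Dom E s u dv

/-- `u` is an ancestor of `w` in the tree given by parent function `parent` (reflexive). -/
def Anc (parent : V → V) (u w : V) : Prop := ∃ k, parent^[k] w = u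

/-- The tree with parent function `t` has the parent property for flow graph `(E, s)`. -/
def ParentProp (E : V → V → Prop) (s : V) (t : V → V) : Prop :=
  ∀ v w, E v w → Reach E s v → Anc t (t w) v

/-- The tree with parent function `t` has the sibling property for flow graph `(E, s)`. -/
def SiblingProp (E : V → V → Prop) (s : V) (t : V → V) : Prop :=
  ∀ v w, Reach E s v → Reach E s w → v ≠ s → w ≠ s → t v = t w → v ≠ w → ¬ Dom E s v w

/-- `t` is (the parent function of) a tree rooted at `s` on the reachable vertices. -/
def IsRootedTree (E : V → V → Prop) (s : V) (t : V → V) : Prop :=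
  t s = s ∧ ∀ v, Reach E s v → (v ≠ s → Reach E s (t v)) ∧ ∃ k, t^[k] v = s

lemma isPath_ne_nil {E : V → V → Prop} {a b : V} {p : List V} (h : IsPath E a b p) :
    p ≠ [] := by
  rintro rfl; simp [IsPath] at h

lemma isPath_split {E : V → V → Prop} {s v w : V} {p1 p2 : List V}
    (h : IsPath E s v (p1 ++ w :: p2)) :
    IsPath E s w (p1 ++ [w]) ∧ IsPath E w v (w :: p2) := by
  obtain ⟨hc, hh, hl⟩ := h
  refine ⟨⟨hc.prefix ?_, ?_, ?_⟩, ⟨hc.suffix ?_, rfl, ?_⟩⟩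
  · exact ⟨p2, by simp⟩
  · rw [List.head?_append] at hh ⊢
    cases p1 <;> simpa using hh
  · rw [List.getLast?_append]; simp
  · exact ⟨p1, rfl⟩
  · rw [List.getLast?_append] at hl
    simpa using hl

lemma isPath_comp {E : V → V → Prop} {s v w : V} {q p2 : List V}
    (h1 : IsPath E s w q) (h2 : IsPath E w v (w :: p2)) : IsPath E s v (q ++ p2) := by
  obtain ⟨hc1, hh1, hl1⟩ := h1
  obtain ⟨hc2, hh2, hl2⟩ := h2
  refine ⟨?_, ?_, ?_⟩
  · simp only [List.Chain'] at hc1 hc2 ⊢; rw [List.isChain_append]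
    refine ⟨hc1, hc2.tail, fun x hx y hy => ?_⟩
    rw [hl1] at hx
    obtain rfl : x = w := (by simpa using hx : w = x).symm
    rcases p2 with _ | ⟨z, p2⟩
    · simp at hy
    · obtain rfl : y = z := (by simpa using hy : z = y).symm
      exact (List.isChain_cons_cons.mp hc2).1
  · rw [List.head?_append, hh1]; rfl
  · rw [List.getLast?_append]
    rcases p2 with _ | ⟨z, p2⟩
    · simpa using hl2.symm ▸ hl1
    · simpa using hl2

/-- Split a path at the *last* occurrence of a member. -/
lemma isPath_split_last {E : V → V → Prop} {s v w : V} {p : List V}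
    (h : IsPath E s v p) (hm : w ∈ p) :
    ∃ p1 p2, p = p1 ++ w :: p2 ∧ IsPath E s w (p1 ++ [w]) ∧ IsPath E w v (w :: p2) ∧
      w ∉ p2 := by
  have hm' : w ∈ p.reverse := by simpa using hm
  obtain ⟨as, bs, hab, hnot⟩ := List.eq_append_cons_of_mem hm'
  have hp : p = bs.reverse ++ w :: as.reverse := by
    have := congrArg List.reverse hab
    simpa using this
  subst hp
  obtain ⟨h1, h2⟩ := isPath_split h
  exact ⟨bs.reverse, as.reverse, rfl, h1, h2, by simpa using hnot⟩

lemma reach_of_mem {E : V → V → Prop} {s v w : V} {p : List V}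
    (h : IsPath E s v p) (hm : w ∈ p) : Reach E s w := by
  obtain ⟨as, bs, hab⟩ := List.append_of_mem hm
  subst hab
  exact ⟨as ++ [w], (isPath_split h).1⟩

/-- The proper dominators of a reachable vertex `v ≠ s` are totally ordered by dominance. -/
theorem proper_dominators_totally_ordered (E : V → V → Prop) (s v : V)
    (hv : Reach E s v) (hvs : v ≠ s)
    (u w : V) (hu : Dom E s u v) (hune : u ≠ v) (hw : Dom E s w v) (hwne : w ≠ v) :
    Dom E s u w ∨ Dom E s w u := by
  obtain ⟨p, hp⟩ := hv
  have hup : u ∈ p := hu.2 p hp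
  have hwp : w ∈ p := hw.2 p hp
  have hreachw : Reach E s w := reach_of_mem hp hwp
  have hreachu : Reach E s u := reach_of_mem hp hup
  by_cases huw : u = w
  · subst huw
    left
    refine ⟨hreachw, fun q hq => ?_⟩
    have := hq.2.2
    have hne := isPath_ne_nil hq
    rw [List.getLast?_eq_getLast hne] at this
    obtain rfl : q.getLast hne = u := by simpa using this
    exact List.getLast_mem hne
  obtain ⟨a, b, rfl, hpa, hpb, hub⟩ := isPath_split_last hp hup
  by_cases hwb : w ∈ b
  · -- w occurs after the last u; u dominates w
    left
    obtain ⟨c, d, heq, _, hwd, hwnd⟩ := isPath_split_last hpb (List.mem_cons_of_mem u hwb)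
    -- hwd : IsPath E w v (w :: d), and u ∉ d
    have hund : u ∉ d := by
      intro hd
      rcases c with _ | ⟨x, c'⟩
      · have h' : u = w ∧ b = d := by simpa using heq
        exact huw h'.1
      · have h' : u = x ∧ b = c' ++ w :: d := by simpa using heq
        exact hub (h'.2 ▸ List.mem_append_right c' (List.mem_cons_of_mem w hd))
    refine ⟨hreachw, fun q hq => ?_⟩
    have hqd : IsPath E s v (q ++ d) := isPath_comp hq hwd
    have : u ∈ q ++ d := hu.2 _ hqd
    rcases List.mem_append.mp this with h | h
    · exact h
    · exact absurd h hund
  · -- w occurs before the last u; w dominates u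
    right
    have hwa : w ∈ a := by
      rcases List.mem_append.mp hwp with h | h
      · exact h
      · rcases List.mem_cons.mp h with h | h
        · exact absurd h.symm huw
        · exact absurd h hwb
    have hwub : w ∉ u :: b := by
      intro h
      rcases List.mem_cons.mp h with h | h
      · exact huw h.symm
      · exact hwb h
    refine ⟨hreachu, fun q hq => ?_⟩
    have hqb : IsPath E s v (q ++ b) := isPath_comp hq hpb
    have : w ∈ q ++ b := hw.2 _ hqb
    rcases List.mem_append.mp this with h | h
    · exact h
    · exact absurd h hwb
end

section
/- Let T be a rooted tree on the reachable vertices of a flow graph G with root s satisfying the parent property. If v is an ancestor of w in T and there is a path from v to w in G, then every vertex on any simple path from v to w in G is a descendant of v in T but not a proper descendant of w in T. -/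
variable {V : Type*}

lemma path_snoc {E : V → V → Prop} {a b y : V} {q : List V}
    (h : IsPath E a b q) (e : E b y) : IsPath E a y (q ++ [y]) := by
  obtain ⟨hc, hh, hl⟩ := h
  have hq : q ≠ [] := by rintro rfl; simp at hh
  refine ⟨?_, ?_, ?_⟩
  · show List.IsChain E (q ++ [y]); rw [List.isChain_append]
    refine ⟨hc, List.isChain_singleton _, ?_⟩
    intro x hx y' hy'
    simp only [List.head?_cons, Option.mem_def, Option.some.injEq] at hy'
    rw [hl] at hx
    simp only [Option.mem_def, Option.some.injEq] at hx
    subst hx; subst hy'; exact e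
  · rwa [List.head?_append_of_ne_nil _ hq]
  · simp

lemma reach_step {E : V → V → Prop} {s a y : V} (h : Reach E s a) (e : E a y) :
    Reach E s y := by
  obtain ⟨q, hq⟩ := h
  exact ⟨q ++ [y], path_snoc hq e⟩

lemma anc_of_path {E : V → V → Prop} {s : V} {t : V → V} (hpp : ParentProp E s t) :
    ∀ (p : List V) (a b c : V), IsPath E a b p → Reach E s a → Anc t c b → c ∉ p →
      Anc t c a := by
  intro p
  induction p with
  | nil => intro a b c h; exact absurd h.2.1 (by simp)
  | cons x rest ih =>
    intro a b c h hra hcb hcp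
    obtain ⟨hc, hh, hl⟩ := h
    simp only [List.head?_cons, Option.some.injEq] at hh
    subst hh
    match rest, hc, hl with
    | [], _, hl =>
      simp only [List.getLast?_singleton, Option.some.injEq] at hl
      subst hl; exact hcb
    | y :: rest', hc, hl =>
      have hxy : E x y := (List.isChain_cons_cons.mp hc).1
      have hrest : IsPath E y b (y :: rest') :=
        ⟨(List.isChain_cons_cons.mp hc).2, rfl, hl⟩
      have hry : Reach E s y := reach_step hra hxy
      have hcy : Anc t c y :=
        ih y b c hrest hry hcb (fun hm => hcp (List.mem_cons_of_mem _ hm))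
      -- c ancestor of y, c ≠ y
      obtain ⟨m, hm⟩ := hcy
      match m, hm with
      | 0, hm => exact absurd hm.symm (by rintro rfl; exact hcp (by simp))
      | m' + 1, hm =>
        obtain ⟨k, hk⟩ := hpp x y hxy hra
        refine ⟨m' + k, ?_⟩
        rw [Function.iterate_add_apply, hk]
        rw [show m' + 1 = m' + 1 from rfl] at hm
        have : t^[m'] (t y) = c := by
          rw [← Function.iterate_succ_apply]; exact hm
        exact this

lemma reach_along {E : V → V → Prop} {s : V} :
    ∀ (p : List V) (a b : V), IsPath E a b p → Reach E s a → Reach E s b := by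
  intro p
  induction p with
  | nil => intro a b h; exact absurd h.2.1 (by simp)
  | cons x rest ih =>
    intro a b h hra
    obtain ⟨hc, hh, hl⟩ := h
    simp only [List.head?_cons, Option.some.injEq] at hh
    subst hh
    match rest, hc, hl with
    | [], _, hl =>
      simp only [List.getLast?_singleton, Option.some.injEq] at hl
      subst hl; exact hra
    | y :: rest', hc, hl =>
      have hxy : E x y := (List.isChain_cons_cons.mp hc).1
      exact ih y b ⟨(List.isChain_cons_cons.mp hc).2, rfl, hl⟩ (reach_step hra hxy)

lemma anc_antisymm {t : V → V} {s v w : V} (hs : t s = s) {m : ℕ} (hm : t^[m] v = s)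
    (hvw : Anc t v w) (hwv : Anc t w v) : v = w := by
  obtain ⟨k, hk⟩ := hvw
  obtain ⟨j, hj⟩ := hwv
  rcases Nat.eq_zero_or_pos (k + j) with h0 | hpos
  · have hj0 : j = 0 := by omega
    subst hj0; exact hj.symm ▸ rfl
  · -- t^[k+j] v = v
    have hcyc : t^[k + j] v = v := by
      rw [Function.iterate_add_apply, hj, hk]
    have hrep : ∀ n, t^[n * (k + j)] v = v := by
      intro n
      induction n with
      | zero => simp
      | succ n ihn => rw [Nat.succ_mul, Function.iterate_add_apply, hcyc, ihn]
    have hsfix : ∀ i, t^[i] s = s := fun i => Function.iterate_fixed hs i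
    have hvs : v = s := by
      have h1 : t^[m * (k + j)] v = v := hrep m
      have hge : m * (k + j) ≥ m := Nat.le_mul_of_pos_right m hpos
      have : t^[m * (k + j) - m + m] v = v := by rwa [Nat.sub_add_cancel hge]
      rw [Function.iterate_add_apply, hm, hsfix] at this
      exact this.symm
    have hws : w = s := by
      rw [← hj, hvs, hsfix]
    rw [hvs, hws]

/-- If a tree `t` rooted at `s` has the parent property, `v` is an ancestor of `w` in `t`,
and there is a path from `v` to `w` in `G`, then every vertex on any simple path from
`v` to `w` in `G` is a descendant of `v` but not a proper descendant of `w` in `t`. -/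
theorem parent_property_path (E : V → V → Prop) (s : V) (t : V → V)
    (ht : IsRootedTree E s t) (hpp : ParentProp E s t)
    (v w : V) (hv : Reach E s v) (hw : Reach E s w) (hanc : Anc t v w)
    (hpath : ∃ p, IsPath E v w p) :
    ∀ p, IsPath E v w p → p.Nodup → ∀ u ∈ p, Anc t v u ∧ ¬ (Anc t w u ∧ u ≠ w) := by
  intro p hp hnd u hu
  obtain ⟨p1, p2, rfl⟩ := List.append_of_mem hu
  obtain ⟨hc, hh, hl⟩ := hp
  -- prefix path v → u
  have hpre : IsPath E v u (p1 ++ [u]) := by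
    refine ⟨?_, ?_, ?_⟩
    · have : (p1 ++ [u]) <+: p1 ++ u :: p2 := ⟨p2, by simp⟩
      exact hc.prefix this
    · cases p1 <;> simp_all
    · simp
  -- suffix path u → w
  have hsuf : IsPath E u w (u :: p2) := by
    refine ⟨hc.suffix ⟨p1, rfl⟩, rfl, ?_⟩
    rwa [List.getLast?_append_of_ne_nil _ (by simp)] at hl
  have hdisj : p1.Disjoint (u :: p2) := List.disjoint_of_nodup_append hnd
  have hru : Reach E s u := reach_along (p1 ++ [u]) v u hpre hv
  constructor
  · -- v is an ancestor of u
    by_cases hvmem : v ∈ u :: p2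
    · match p1, hh with
      | [], hh =>
        simp only [List.nil_append, List.head?_cons, Option.some.injEq] at hh
        exact hh ▸ ⟨0, rfl⟩
      | x :: p1', hh =>
        simp only [List.cons_append, List.head?_cons, Option.some.injEq] at hh
        exact absurd hvmem (fun hm => hdisj (hh ▸ (List.mem_cons_self (a := x) (l := p1'))) hm)
    · exact anc_of_path hpp (u :: p2) u w v hsuf hru hanc hvmem
  · -- u is not a proper descendant of w
    rintro ⟨hwu, hne⟩
    have hwnot : w ∉ p1 ++ [u] := by
      intro hm
      rcases List.mem_append.mp hm with hm1 | hm2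
      · match p2, hl with
        | [], hl =>
          have : (p1 ++ [u]).getLast? = some u := by simp
          rw [show p1 ++ u :: ([] : List V) = p1 ++ [u] from rfl, this] at hl
          exact hne (Option.some.inj hl)
        | z :: p2', hl =>
          rw [List.getLast?_append_of_ne_nil _ (by simp)] at hl
          exact hdisj hm1 (List.mem_of_getLast? hl)
      · simp only [List.mem_singleton] at hm2
        exact hne (hm2 ▸ rfl)
    have hwv : Anc t w v := anc_of_path hpp (p1 ++ [u]) v u w hpre hv hwu hwnot
    obtain ⟨m, hm⟩ := (ht.2 v hv).2
    have hveqw : v = w := anc_antisymm ht.1 hm hanc hwv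
    match p1, hh with
    | [], hh =>
      simp only [List.nil_append, List.head?_cons, Option.some.injEq] at hh
      exact hne (hh ▸ hveqw ▸ rfl)
    | x :: p1', hh =>
      simp only [List.cons_append, List.head?_cons, Option.some.injEq] at hh
      exact hwnot (List.mem_append_left _ (by rw [← hveqw, ← hh]; exact (List.mem_cons_self (a := x) (l := p1'))))
end

section
/- A tree T rooted at s on the reachable vertices of a flow graph G is equal to the dominator tree of G if and only if T has both the parent property and the sibling property. -/
variable {V : Type*}

section Aux

variable {E : V → V → Prop} {s : V} {t : V → V}

lemma isPath_single (E : V → V → Prop) (s : V) : IsPath E s s [s] :=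
  ⟨List.isChain_singleton s, rfl, rfl⟩

lemma reach_self (E : V → V → Prop) (s : V) : Reach E s s := ⟨[s], isPath_single E s⟩

lemma IsPath.ne_nil {a b : V} {p : List V} (h : IsPath E a b p) : p ≠ [] := by
  rintro rfl; simp [IsPath] at h

lemma isPath_prefix {v u : V} {a b : List V} (h : IsPath E s v (a ++ u :: b)) :
    IsPath E s u (a ++ [u]) := by
  obtain ⟨hc, hh, -⟩ := h
  refine ⟨hc.prefix ⟨b, by simp⟩, ?_, by simp⟩
  cases a <;> simpa using hh

lemma isPath_extend {v w : V} {p : List V} (h : IsPath E s v p) (hE : E v w) :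
    IsPath E s w (p ++ [w]) := by
  obtain ⟨hc, hh, hl⟩ := h
  refine ⟨List.isChain_append.mpr ⟨hc, List.isChain_singleton w, ?_⟩, ?_, List.getLast?_concat (l := p)⟩
  · intro x hx y hy
    rw [hl] at hx
    simp at hx hy; subst hx; subst hy; exact hE
  · cases p with
    | nil => simp at hh
    | cons c q => simpa using hh

lemma isPath_splice {v w : V} {q a b : List V} (hq : IsPath E s w q)
    (hp : IsPath E s v (a ++ w :: b)) : IsPath E s v (q ++ b) := by
  obtain ⟨hc, hh, hl⟩ := hp
  have hcb : List.Chain' E (w :: b) := hc.suffix ⟨a, rfl⟩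
  cases b with
  | nil =>
    have : v = w := by
      have : (a ++ [w]).getLast? = some v := hl
      rw [List.getLast?_concat] at this
      exact (Option.some_inj.mp this).symm
    subst this
    simpa using hq
  | cons y b' =>
    obtain ⟨hqc, hqh, hql⟩ := hq
    refine ⟨List.isChain_append.mpr ⟨hqc, hcb.tail, ?_⟩, ?_, ?_⟩
    · intro x hx z hz
      rw [hql] at hx
      simp at hx hz; subst hx; subst hz
      exact List.isChain_cons_cons.mp hcb |>.1
    · cases q with
      | nil => simp at hql
      | cons c q' => simpa using hqh
    · rw [List.getLast?_append_of_ne_nil _ (by simp : (y :: b') ≠ [])]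
      rw [show a ++ w :: y :: b' = (a ++ [w]) ++ y :: b' by simp] at hl
      rw [List.getLast?_append_of_ne_nil _ (by simp : (y :: b') ≠ [])] at hl
      exact hl

lemma mem_split_last {p : List V} {u : V} (h : u ∈ p) :
    ∃ a b, p = a ++ u :: b ∧ u ∉ b := by
  induction p with
  | nil => simp at h
  | cons x rest ih =>
    by_cases hr : u ∈ rest
    · obtain ⟨a, b, rfl, hb⟩ := ih hr
      exact ⟨x :: a, b, rfl, hb⟩
    · have : u = x := by rcases List.mem_cons.mp h with h' | h' <;> [exact h'; exact absurd h' hr]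
      subst this
      exact ⟨[], rest, rfl, hr⟩

lemma dom_reach {u v : V} (h : Dom E s u v) : Reach E s u := by
  obtain ⟨⟨p, hp⟩, hall⟩ := h
  obtain ⟨a, b, rfl⟩ := List.append_of_mem (hall p hp)
  exact ⟨a ++ [u], isPath_prefix hp⟩

lemma dom_refl {v : V} (h : Reach E s v) : Dom E s v v :=
  ⟨h, fun _ hp => List.mem_of_mem_getLast? hp.2.2⟩

lemma dom_trans {a b c : V} (h1 : Dom E s a b) (h2 : Dom E s b c) : Dom E s a c := by
  refine ⟨h2.1, fun p hp => ?_⟩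
  obtain ⟨x, y, rfl⟩ := List.append_of_mem (h2.2 p hp)
  have := h1.2 _ (isPath_prefix hp)
  simp only [List.mem_append, List.mem_cons, List.mem_singleton] at this ⊢
  tauto

lemma dom_s {u : V} (h : Dom E s u s) : u = s := by
  have := h.2 [s] (isPath_single E s)
  simpa using this

lemma not_dom_iff {x y : V} (hr : Reach E s y) :
    ¬ Dom E s x y ↔ ∃ p, IsPath E s y p ∧ x ∉ p := by
  simp only [Dom, hr, true_and]
  push_neg
  rfl

lemma dom_antisymm {a b : V} (h1 : Dom E s a b) (h2 : Dom E s b a) : a = b := by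
  classical
  by_contra hne
  obtain ⟨p0, hp0⟩ := h1.1
  have hex : ∃ n, ∃ p : List V, IsPath E s b p ∧ p.length = n := ⟨p0.length, p0, hp0, rfl⟩
  obtain ⟨p, hp, hlen⟩ := Nat.find_spec hex
  obtain ⟨c, d, rfl⟩ := List.append_of_mem (h1.2 p hp)
  have hpre : IsPath E s a (c ++ [a]) := isPath_prefix hp
  have hbmem : b ∈ c ++ [a] := h2.2 _ hpre
  have hbc : b ∈ c := by
    rcases List.mem_append.mp hbmem with h | h
    · exact h
    · simp at h; exact absurd h.symm hne
  obtain ⟨c1, c2, rfl⟩ := List.append_of_mem hbc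
  have hp2 : IsPath E s b (c1 ++ b :: (c2 ++ a :: d)) := by simpa using hp
  have hpre2 : IsPath E s b (c1 ++ [b]) := isPath_prefix hp2
  have hlt : (c1 ++ [b]).length < Nat.find hex := by
    simp only [List.length_append, List.length_cons, List.length_nil] at hlen ⊢
    omega
  exact Nat.find_min hex hlt ⟨c1 ++ [b], hpre2, rfl⟩

lemma dom_linear {u1 u2 v : V} (h1 : Dom E s u1 v) (h2 : Dom E s u2 v) :
    Dom E s u1 u2 ∨ Dom E s u2 u1 := by
  by_contra hcon
  push_neg at hcon
  obtain ⟨hn1, hn2⟩ := hcon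
  obtain ⟨q, hq, hq1⟩ := (not_dom_iff (dom_reach h2)).mp hn1
  obtain ⟨r, hr, hr2⟩ := (not_dom_iff (dom_reach h1)).mp hn2
  obtain ⟨p, hp⟩ := h1.1
  obtain ⟨a, b, hab, hnb⟩ := mem_split_last (h1.2 p hp)
  subst hab
  have hrb : IsPath E s v (r ++ b) := isPath_splice hr hp
  have hu2b : u2 ∈ b := by
    rcases List.mem_append.mp (h2.2 _ hrb) with h | h
    · exact absurd h hr2
    · exact h
  obtain ⟨c, d, hcd, hnd⟩ := mem_split_last hu2b
  subst hcd
  have hp' : IsPath E s v ((a ++ u1 :: c) ++ u2 :: d) := by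
    rw [show (a ++ u1 :: c) ++ u2 :: d = a ++ u1 :: (c ++ u2 :: d) by simp]
    exact hp
  have hqd : IsPath E s v (q ++ d) := isPath_splice hq hp'
  rcases List.mem_append.mp (h1.2 _ hqd) with h | h
  · exact hq1 h
  · exact hnb (by simp [h])

lemma anc_refl (t : V → V) (x : V) : Anc t x x := ⟨0, rfl⟩

lemma anc_parent (t : V → V) (x : V) : Anc t (t x) x := ⟨1, rfl⟩

lemma anc_trans {x y z : V} (h1 : Anc t y x) (h2 : Anc t z y) : Anc t z x := by
  obtain ⟨a, ha⟩ := h1; obtain ⟨b, hb⟩ := h2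
  exact ⟨b + a, by rw [Function.iterate_add_apply, ha, hb]⟩

lemma iterate_reach (ht : IsRootedTree E s t) {x : V} (hx : Reach E s x) (k : ℕ) :
    Reach E s (t^[k] x) := by
  induction k with
  | zero => exact hx
  | succ n ih =>
    rw [Function.iterate_succ_apply']
    by_cases h : t^[n] x = s
    · rw [h, ht.1]; exact reach_self E s
    · exact (ht.2 _ ih).1 h

lemma anc_reach (ht : IsRootedTree E s t) {x y : V} (hx : Reach E s x) (h : Anc t y x) :
    Reach E s y := by
  obtain ⟨k, hk⟩ := h
  exact hk ▸ iterate_reach ht hx k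

lemma anc_antisymm_s5 (ht : IsRootedTree E s t) {x y : V} (hx : Reach E s x)
    (h1 : Anc t y x) (h2 : Anc t x y) : x = y := by
  obtain ⟨a, ha⟩ := h1; obtain ⟨b, hb⟩ := h2
  rcases Nat.eq_zero_or_pos (a + b) with hc | hc
  · have : a = 0 := by omega
    subst this; simpa using ha
  · have hcyc : t^[a + b] x = x := by rw [Nat.add_comm, Function.iterate_add_apply, ha, hb]
    obtain ⟨m, hm⟩ := (ht.2 x hx).2
    have hxs : x = s := by
      have hmul : (t^[a + b])^[m] x = x := Function.iterate_fixed hcyc m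
      rw [← Function.iterate_mul] at hmul
      have hge : m ≤ (a + b) * m := Nat.le_mul_of_pos_left m hc
      have : t^[(a + b) * m] x = s := by
        rw [show (a + b) * m = ((a + b) * m - m) + m by omega,
          Function.iterate_add_apply, hm, Function.iterate_fixed ht.1]
      rw [hmul] at this; exact this
    subst hxs
    rw [Function.iterate_fixed ht.1] at ha
    exact ha

lemma parent_ne (ht : IsRootedTree E s t) {x : V} (hx : Reach E s x) (hxs : x ≠ s) :
    t x ≠ x := by
  intro h
  obtain ⟨k, hk⟩ := (ht.2 x hx).2
  exact hxs ((Function.iterate_fixed h k).symm.trans hk)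

lemma anc_root (ht : IsRootedTree E s t) {x : V} (hx : Reach E s x) : Anc t s x :=
  (ht.2 x hx).2

lemma path_cases {p : List V} {x : V} (hp : IsPath E s x p) :
    (p = [s] ∧ x = s) ∨ ∃ p' x', p = p' ++ [x] ∧ IsPath E s x' p' ∧ E x' x := by
  obtain ⟨hc, hh, hl⟩ := hp
  rcases List.eq_nil_or_concat p with rfl | ⟨q, a, rfl⟩
  · simp at hh
  · simp only [List.concat_eq_append] at *
    have hax : a = x := by rw [List.getLast?_concat] at hl; exact Option.some_inj.mp hl
    subst hax
    rcases List.eq_nil_or_concat q with rfl | ⟨q', y, rfl⟩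
    · left
      simp at hh
      subst hh; exact ⟨rfl, rfl⟩
    · right
      simp only [List.concat_eq_append] at *
      refine ⟨q' ++ [y], y, rfl, ⟨hc.prefix ⟨[a], by simp⟩, ?_, List.getLast?_concat (l := q')⟩, ?_⟩
      · cases q' <;> simpa using hh
      · have := List.isChain_append.mp hc
        exact this.2.2 y (by simp [List.getLast?_concat]) a rfl

lemma path_mem_anc (ht : IsRootedTree E s t) (hpp : ParentProp E s t) :
    ∀ n (p : List V) (x y : V), p.length = n → IsPath E s x p → Anc t y x → y ∈ p := by
  intro n
  induction n using Nat.strong_induction_on with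
  | _ n IH =>
    intro p x y hlen hp hanc
    rcases path_cases hp with ⟨rfl, rfl⟩ | ⟨p', x', rfl, hp', hE⟩
    · obtain ⟨k, hk⟩ := hanc
      rw [Function.iterate_fixed ht.1] at hk
      simp [← hk]
    · obtain ⟨k, hk⟩ := hanc
      match k with
      | 0 => simp [← hk]
      | k + 1 =>
        have hx' : Reach E s x' := ⟨p', hp'⟩
        obtain ⟨m, hm⟩ := hpp x' x hE hx'
        have hy : t^[k + m] x' = y := by
          rw [Function.iterate_add_apply, hm, ← Function.iterate_succ_apply, hk]
        have hlt : p'.length < n := by rw [← hlen]; simp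
        have := IH p'.length hlt p' x' y rfl hp' ⟨k + m, hy⟩
        simp [this]

lemma anc_dom (ht : IsRootedTree E s t) (hpp : ParentProp E s t) {x y : V}
    (hx : Reach E s x) (h : Anc t y x) : Dom E s y x :=
  ⟨hx, fun p hp => path_mem_anc ht hpp p.length p x y rfl hp h⟩

lemma idom_dom_anc (ht : IsRootedTree E s t)
    (h : ∀ v, Reach E s v → v ≠ s → IsIdom E s (t v) v) :
    ∀ n (x u : V), Reach E s x → t^[n] x = s → Dom E s u x → Anc t u x := by
  intro n
  induction n using Nat.strong_induction_on with
  | _ n IH =>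
    intro x u hx hn hdom
    by_cases hxs : x = s
    · have hus : u = s := dom_s (hxs ▸ hdom)
      exact ⟨0, by simp [hxs, hus]⟩
    · by_cases hux : u = x
      · subst hux; exact anc_refl t u
      · have hid := h x hx hxs
        have hutx : Dom E s u (t x) := hid.2.2 u hdom hux
        match n, hn with
        | 0, hn => exact absurd hn hxs
        | m + 1, hn =>
          have hm : t^[m] (t x) = s := by rw [← Function.iterate_succ_apply]; exact hn
          have := IH m (Nat.lt_succ_self m) (t x) u ((ht.2 x hx).1 hxs) hm hutx
          exact anc_trans (anc_parent t x) this

lemma props_dom_anc (ht : IsRootedTree E s t) (hpp : ParentProp E s t)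
    (hsp : SiblingProp E s t) :
    ∀ n (x u : V), Reach E s x → t^[n] x = s → Dom E s u x → Anc t u x := by
  classical
  intro n
  induction n using Nat.strong_induction_on with
  | _ n IH =>
    intro x u hx hn hdom
    by_cases hxs : x = s
    · have hus : u = s := dom_s (hxs ▸ hdom)
      exact ⟨0, by simp [hxs, hus]⟩
    by_cases hux : u = x
    · subst hux; exact anc_refl t u
    by_cases hanc : Anc t u x
    · exact hanc
    have htxr : Reach E s (t x) := (ht.2 x hx).1 hxs
    by_cases hutx : Dom E s u (t x)
    · match n, hn with
      | 0, hn => exact absurd hn hxs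
      | m + 1, hn =>
        have hm : t^[m] (t x) = s := by rw [← Function.iterate_succ_apply]; exact hn
        exact anc_trans (anc_parent t x) (IH m (Nat.lt_succ_self m) (t x) u htxr hm hutx)
    exfalso
    have htxx : Dom E s (t x) x := anc_dom ht hpp hx (anc_parent t x)
    have htxu : Dom E s (t x) u := (dom_linear hdom htxx).resolve_left hutx
    have hur : Reach E s u := dom_reach hdom
    -- minimal i with t^[i] u an ancestor of x
    obtain ⟨i, hzanc, hmini⟩ :
        ∃ i, Anc t (t^[i] u) x ∧ ∀ j, j < i → ¬ Anc t (t^[j] u) x := by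
      have hex : ∃ i, Anc t (t^[i] u) x := by
        obtain ⟨m', hm'⟩ := (ht.2 u hur).2
        exact ⟨m', by rw [hm']; exact anc_root ht hx⟩
      exact ⟨Nat.find hex, Nat.find_spec hex, fun j hj => Nat.find_min hex hj⟩
    have hipos : 0 < i := by
      rcases Nat.eq_zero_or_pos i with rfl | h0
      · exact absurd hzanc hanc
      · exact h0
    have htu₀ : t (t^[i-1] u) = t^[i] u := by
      have h1 : t^[(i-1)+1] u = t^[i] u := by rw [Nat.sub_add_cancel hipos]
      rw [Function.iterate_succ_apply'] at h1
      exact h1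
    have hu₀ancu : Anc t (t^[i-1] u) u := ⟨i - 1, rfl⟩
    have hnu₀ : ¬ Anc t (t^[i-1] u) x := hmini (i-1) (by omega)
    by_cases hzx : t^[i] u = x
    · -- x is an ancestor of u
      have hxancu : Anc t x u := ⟨i, hzx⟩
      exact hux (dom_antisymm hdom (anc_dom ht hpp hur hxancu))
    -- minimal m0 with t^[m0] x = t^[i] u
    obtain ⟨m0, hm0, hminm⟩ :
        ∃ m0, t^[m0] x = t^[i] u ∧ ∀ j, j < m0 → t^[j] x ≠ t^[i] u := by
      have hex2 : ∃ m, t^[m] x = t^[i] u := hzanc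
      exact ⟨Nat.find hex2, Nat.find_spec hex2, fun j hj => Nat.find_min hex2 hj⟩
    have hm0pos : 0 < m0 := by
      rcases Nat.eq_zero_or_pos m0 with rfl | h0
      · exact absurd hm0 (by simpa using (Ne.symm hzx))
      · exact h0
    have htw₀ : t (t^[m0-1] x) = t^[i] u := by
      have h1 : t^[(m0-1)+1] x = t^[i] u := by rw [Nat.sub_add_cancel hm0pos]; exact hm0
      rw [Function.iterate_succ_apply'] at h1
      exact h1
    have hw₀anc : Anc t (t^[m0-1] x) x := ⟨m0 - 1, rfl⟩
    have hu₀w₀ : t^[i-1] u ≠ t^[m0-1] x := fun h => hnu₀ (h ▸ hw₀anc)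
    have hu₀s : t^[i-1] u ≠ s := fun h => hnu₀ (h ▸ anc_root ht hx)
    have hw₀s : t^[m0-1] x ≠ s := by
      intro h
      have hzs : t^[i] u = s := by rw [← htw₀, h, ht.1]
      exact hminm (m0 - 1) (by omega) (by rw [h, hzs])
    have hu₀r : Reach E s (t^[i-1] u) := anc_reach ht hur hu₀ancu
    have hw₀r : Reach E s (t^[m0-1] x) := anc_reach ht hx hw₀anc
    have hs1 : ¬ Dom E s (t^[i-1] u) (t^[m0-1] x) :=
      hsp _ _ hu₀r hw₀r hu₀s hw₀s (htu₀.trans htw₀.symm) hu₀w₀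
    have hs2 : ¬ Dom E s (t^[m0-1] x) (t^[i-1] u) :=
      hsp _ _ hw₀r hu₀r hw₀s hu₀s (htw₀.trans htu₀.symm) (Ne.symm hu₀w₀)
    rcases Nat.lt_or_ge m0 2 with hm2 | hm2
    · -- m0 = 1 : path to x avoiding t^[i-1] u contradicts u Dom x
      have hm01 : m0 = 1 := by omega
      have hs1' : ¬ Dom E s (t^[i-1] u) x := by
        rw [hm01] at hs1; simpa using hs1
      obtain ⟨q, hq, hq₀⟩ := (not_dom_iff hx).mp hs1'
      obtain ⟨aa, bb, rfl⟩ := List.append_of_mem (hdom.2 q hq)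
      have hpre : IsPath E s u (aa ++ [u]) := isPath_prefix hq
      have hmem : t^[i-1] u ∈ aa ++ [u] :=
        path_mem_anc ht hpp (aa ++ [u]).length (aa ++ [u]) u _ rfl hpre hu₀ancu
      apply hq₀
      rcases List.mem_append.mp hmem with h | h
      · exact List.mem_append.mpr (Or.inl h)
      · simp only [List.mem_singleton] at h
        rw [h]
        exact List.mem_append.mpr (Or.inr (List.mem_cons_self (a := u) (l := bb)))
    · -- m0 ≥ 2 : t^[m0-1] x is an ancestor of t x, so it dominates u
      have hw₀tx : Anc t (t^[m0-1] x) (t x) := by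
        refine ⟨m0 - 2, ?_⟩
        have h1 : t^[(m0-2)+1] x = t^[m0-1] x := by congr 1; omega
        rw [Function.iterate_succ_apply] at h1
        exact h1
      have hw₀u : Dom E s (t^[m0-1] x) u := dom_trans (anc_dom ht hpp htxr hw₀tx) htxu
      have hu₀u : Dom E s (t^[i-1] u) u := anc_dom ht hpp hur hu₀ancu
      rcases dom_linear hu₀u hw₀u with h | h
      · exact hs1 h
      · exact hs2 h

end Aux

/-- A tree `t` rooted at `s` on the reachable vertices is the dominator tree
(i.e. the parent of every reachable `v ≠ s` is its immediate dominator) if and only if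
it has both the parent property and the sibling property. -/
theorem dominator_tree_iff_parent_sibling (E : V → V → Prop) (s : V) (t : V → V)
    (ht : IsRootedTree E s t) :
    (∀ v, Reach E s v → v ≠ s → IsIdom E s (t v) v) ↔
      (ParentProp E s t ∧ SiblingProp E s t) := by
  constructor
  · intro h
    constructor
    · -- parent property
      intro v w hE hv
      have hw : Reach E s w := by
        obtain ⟨p, hp⟩ := hv
        exact ⟨p ++ [w], isPath_extend hp hE⟩
      by_cases hws : w = s
      · subst hws
        rw [ht.1]
        exact anc_root ht hv
      · have hid := h w hw hws
        have hdom : Dom E s (t w) v := by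
          refine ⟨hv, fun p hp => ?_⟩
          have hmem := hid.2.1.2 (p ++ [w]) (isPath_extend hp hE)
          rcases List.mem_append.mp hmem with h' | h'
          · exact h'
          · simp only [List.mem_singleton] at h'
            exact absurd h' hid.1
        obtain ⟨k, hk⟩ := (ht.2 v hv).2
        exact idom_dom_anc ht h k v (t w) hv hk hdom
    · -- sibling property
      intro v w hv hw hvs hws htvw hvw hdom
      obtain ⟨k, hk⟩ := (ht.2 w hw).2
      obtain ⟨j, hj⟩ := idom_dom_anc ht h k w v hw hk hdom
      match j, hj with
      | 0, hj => exact hvw hj.symm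
      | j + 1, hj =>
        have h1 : Anc t v (t v) := by
          refine ⟨j, ?_⟩
          rw [htvw, ← Function.iterate_succ_apply]
          exact hj
        have htvr : Reach E s (t v) := (ht.2 v hv).1 hvs
        exact (h v hv hvs).1 (anc_antisymm_s5 ht htvr h1 (anc_parent t v))
  · rintro ⟨hpp, hsp⟩ v hv hvs
    refine ⟨parent_ne ht hv hvs, anc_dom ht hpp hv (anc_parent t v), ?_⟩
    intro u hu hne
    obtain ⟨k, hk⟩ := (ht.2 v hv).2
    obtain ⟨j, hj⟩ := props_dom_anc ht hpp hsp k v u hv hk hu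
    match j, hj with
    | 0, hj => exact absurd hj.symm hne
    | j + 1, hj =>
      have htvr : Reach E s (t v) := (ht.2 v hv).1 hvs
      refine anc_dom ht hpp htvr ⟨j, ?_⟩
      rw [← Function.iterate_succ_apply]
      exact hj
end

section
/- Let G' be obtained from flow graph G by deleting edge (x, y), where x is reachable in G' and y remains reachable in G'. If a vertex v is affected (d'(v) ≠ d(v)), then d(v) = d(y) and there is a path P from y to v in G such that every vertex w on P satisfies depth(w) > depth(d(v)) in the dominator tree D of G. -/
variable {V : Type*}

namespace DelAux

variable {E F : V → V → Prop} {a b c s w z : V} {p q : List V}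

lemma isPath_ne_nil (h : IsPath E a b p) : p ≠ [] := by
  rintro rfl; simp [IsPath] at h

lemma mem_head (h : IsPath E a b p) : a ∈ p := by
  obtain ⟨-, h2, -⟩ := h
  cases p with
  | nil => simp at h2
  | cons u t => simp at h2; simp [h2]

lemma getLast?_append_right {α} {l l' : List α} (h : l' ≠ []) :
    (l ++ l').getLast? = l'.getLast? := by
  rw [List.getLast?_append]
  cases hl : l'.getLast? with
  | none => exact absurd (by simpa using List.getLast?_eq_none_iff.mp hl) h
  | some c => simp

lemma mem_last (h : IsPath E a b p) : b ∈ p :=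
  List.mem_of_getLast? h.2.2

lemma isPath_singleton : IsPath E s s [s] := by
  simp [IsPath]; exact List.isChain_singleton _

lemma isPath_mono (hEF : ∀ a b, E a b → F a b) (h : IsPath E a b p) : IsPath F a b p :=
  ⟨h.1.imp hEF, h.2.1, h.2.2⟩

lemma isPath_split {p₁ p₂ : List V} (h : IsPath E a b (p₁ ++ w :: p₂)) :
    IsPath E a w (p₁ ++ [w]) ∧ IsPath E w b (w :: p₂) := by
  obtain ⟨hc, hh, hl⟩ := h
  constructor
  · refine ⟨hc.prefix ⟨p₂, by simp⟩, ?_, ?_⟩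
    · cases p₁ with
      | nil => simpa using hh
      | cons u t => simpa using hh
    · simp
  · refine ⟨hc.suffix ⟨p₁, rfl⟩, rfl, ?_⟩
    rw [getLast?_append_right (by simp)] at hl
    exact hl

lemma first_split (h : w ∈ p) : ∃ q r, p = q ++ w :: r ∧ w ∉ q := by
  induction p with
  | nil => simp at h
  | cons a t ih =>
    by_cases haw : a = w
    · exact ⟨[], t, by simp [haw], by simp⟩
    · have : w ∈ t := by rcases List.mem_cons.1 h with h | h; exact absurd h.symm haw; exact h
      obtain ⟨q, r, h1, h2⟩ := ih this
      exact ⟨a :: q, r, by simp [h1], by simp [h2, Ne.symm haw]⟩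

lemma last_split (h : w ∈ p) : ∃ q r, p = q ++ w :: r ∧ w ∉ r := by
  have h' : w ∈ p.reverse := by simpa using h
  obtain ⟨q, r, h1, h2⟩ := first_split h'
  refine ⟨r.reverse, q.reverse, ?_, by simpa using h2⟩
  have := congrArg List.reverse h1
  simpa using this

lemma last_split_unique : ∀ {q r q' r' : List V}, q ++ w :: r = q' ++ w :: r' →
    w ∉ r → w ∉ r' → r = r' := by
  intro q
  induction q with
  | nil =>
    intro r q' r' heq hr hr'
    cases q' with
    | nil => simpa using heq
    | cons a t =>
      simp only [List.nil_append, List.cons_append, List.cons.injEq] at heq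
      exact absurd (heq.2 ▸ (by simp : w ∈ t ++ w :: r')) hr
  | cons a t ih =>
    intro r q' r' heq hr hr'
    cases q' with
    | nil =>
      simp only [List.nil_append, List.cons_append, List.cons.injEq] at heq
      exact absurd (heq.2.symm ▸ (by simp : w ∈ t ++ w :: r)) hr'
    | cons a' t' =>
      simp only [List.cons_append, List.cons.injEq] at heq
      exact ih heq.2 hr hr'

lemma isPath_concat (h₁ : IsPath E a b p) (h₂ : IsPath E b c q) :
    IsPath E a c (p ++ q.tail) := by
  obtain ⟨hc2, hh2, hl2⟩ := h₂
  cases q with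
  | nil => simp at hh2
  | cons b' t =>
    simp only [List.head?_cons, Option.some.injEq] at hh2
    subst hh2
    obtain ⟨hc1, hh1, hl1⟩ := h₁
    refine ⟨?_, ?_, ?_⟩
    · show List.IsChain E _
      rw [List.isChain_append]
      refine ⟨hc1, hc2.tail, ?_⟩
      intro u hu z hz
      rw [hl1] at hu
      simp at hu; subst hu
      cases t with
      | nil => simp at hz
      | cons z' t' =>
        simp at hz; subst hz
        exact (List.isChain_cons_cons.1 hc2).1
    · cases p with
      | nil => simp at hh1
      | cons u t' => simpa using hh1
    · simp only [List.tail_cons]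
      cases t with
      | nil =>
        simp only [List.append_nil, hl1]
        simpa using hl2
      | cons z' t' =>
        rw [getLast?_append_right (by simp)]
        simpa using hl2

lemma mem_concat (h : z ∈ p ++ q.tail) : z ∈ p ∨ z ∈ q := by
  rcases List.mem_append.1 h with h | h
  · exact Or.inl h
  · exact Or.inr (List.mem_of_mem_tail h)

lemma dom_reach (h : Dom E s w z) : Reach E s w := by
  obtain ⟨⟨p, hp⟩, hall⟩ := h
  obtain ⟨q, r, heq, -⟩ := first_split (hall p hp)
  exact ⟨q ++ [w], (isPath_split (heq ▸ hp)).1⟩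

lemma dom_restrict (hEF : ∀ a b, F a b → E a b) (h : Dom E s w z) (hz : Reach F s z) :
    Dom F s w z :=
  ⟨hz, fun p hp => h.2 p (isPath_mono hEF hp)⟩

lemma mutual_dom (h₁ : Dom E s a b) (h₂ : Dom E s b a) : a = b := by
  by_contra hne
  obtain ⟨⟨p, hp⟩, hall⟩ := h₁
  obtain ⟨q, r, heq, haq⟩ := first_split (hall p hp)
  have hqa : IsPath E s a (q ++ [a]) := (isPath_split (heq ▸ hp)).1
  have hbq : b ∈ q ++ [a] := h₂.2 _ hqa
  have hbq' : b ∈ q := by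
    rcases List.mem_append.1 hbq with h | h
    · exact h
    · simp at h; exact absurd h.symm hne
  obtain ⟨q₁, q₂, heq2, -⟩ := first_split hbq'
  have : IsPath E s b (q₁ ++ [b]) := by
    have : q ++ [a] = q₁ ++ b :: (q₂ ++ [a]) := by simp [heq2]
    exact (isPath_split (this ▸ hqa)).1
  have hab : a ∈ q₁ ++ [b] := hall _ this
  have : a ∈ q := by
    rcases List.mem_append.1 hab with h | h
    · exact heq2 ▸ List.mem_append.2 (Or.inl h)
    · simp at h; exact absurd h hne
  exact haq this

lemma dom_trans (h₁ : Dom E s a b) (h₂ : Dom E s b c) : Dom E s a c := by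
  refine ⟨h₂.1, fun p hp => ?_⟩
  obtain ⟨q, r, heq, -⟩ := first_split (h₂.2 p hp)
  have := h₁.2 _ (isPath_split (heq ▸ hp)).1
  rcases List.mem_append.1 this with h | h
  · exact heq ▸ List.mem_append.2 (Or.inl h)
  · simp at h; subst h; exact heq ▸ (by simp)

lemma dom_linear (h₁ : Dom E s a z) (h₂ : Dom E s b z) :
    Dom E s a b ∨ Dom E s b a := by
  by_cases hab : a = b
  · subst hab
    exact Or.inl ⟨dom_reach h₁, fun p hp => mem_last hp⟩
  by_contra hcon
  push_neg at hcon
  obtain ⟨hna, hnb⟩ := hcon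
  have hra : Reach E s a := dom_reach h₁
  have hrb : Reach E s b := dom_reach h₂
  -- path to b avoiding a
  have hpb : ∃ p, IsPath E s b p ∧ a ∉ p := by
    by_contra h; push_neg at h
    exact hna ⟨hrb, fun p hp => h p hp⟩
  have hpa : ∃ p, IsPath E s a p ∧ b ∉ p := by
    by_contra h; push_neg at h
    exact hnb ⟨hra, fun p hp => h p hp⟩
  obtain ⟨pb, hpb, habs⟩ := hpb
  obtain ⟨pa, hpa, hbas⟩ := hpa
  obtain ⟨r, hr⟩ := h₁.1
  have har : a ∈ r := h₁.2 r hr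
  obtain ⟨r₁, r₂, heqa, hnar₂⟩ := last_split har
  have hsufa : IsPath E a z (a :: r₂) := (isPath_split (heqa ▸ hr)).2
  have hcat := isPath_concat hpa hsufa
  have hbr₂ : b ∈ r₂ := by
    have := h₂.2 _ hcat
    rcases mem_concat this with h | h
    · exact absurd h hbas
    · rcases List.mem_cons.1 h with h | h
      · exact absurd h.symm hab
      · exact h
  have hbr : b ∈ r := h₂.2 r hr
  obtain ⟨t₁, t₂, heqb, hnbt₂⟩ := last_split hbr
  have hsufb : IsPath E b z (b :: t₂) := (isPath_split (heqb ▸ hr)).2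
  have hcat2 := isPath_concat hpb hsufb
  have hat₂ : a ∈ t₂ := by
    have := h₁.2 _ hcat2
    rcases mem_concat this with h | h
    · exact absurd h habs
    · rcases List.mem_cons.1 h with h | h
      · exact absurd h hab
      · exact h
  -- now derive contradiction
  obtain ⟨σ, τ, heqσ, hnbτ⟩ := last_split hbr₂
  have heq3 : (r₁ ++ a :: σ) ++ b :: τ = t₁ ++ b :: t₂ := by
    rw [← heqb, heqa, heqσ]; simp
  have hττ : τ = t₂ := last_split_unique heq3 hnbτ hnbt₂
  have : a ∈ r₂ := heqσ ▸ List.mem_append.2 (Or.inr (List.mem_cons.2 (Or.inr (hττ ▸ hat₂))))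
  exact hnar₂ this

end DelAux

namespace DelAux

variable {E : V → V → Prop} {a b s x y : V} {p : List V}

lemma chain'_avoid :
    ∀ {p : List V}, List.Chain' E p → (∀ b ∈ p.tail, b ≠ y) →
      List.Chain' (fun a b => E a b ∧ ¬(a = x ∧ b = y)) p
  | [], _, _ => List.isChain_nil
  | [a], _, _ => List.isChain_singleton _
  | (a :: b :: t), hc, hy => by
    change List.IsChain E _ at hc
    show List.IsChain _ _
    rw [List.isChain_cons_cons] at hc ⊢
    refine ⟨⟨hc.1, fun hxy => (hy b (by simp)) hxy.2⟩,
      chain'_avoid hc.2 (fun c hcy => hy c (List.mem_cons_of_mem _ (by simpa using hcy)))⟩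

lemma isPath_avoid (h : IsPath E a b p) (hy : y ∉ p.tail) :
    IsPath (fun a b => E a b ∧ ¬(a = x ∧ b = y)) a b p :=
  ⟨chain'_avoid h.1 (fun c hc hcy => hy (hcy ▸ hc)), h.2.1, h.2.2⟩

lemma depth_lt (d : V → V) (depth : V → ℕ)
    (hd : ∀ u, Reach E s u → u ≠ s → IsIdom E s (d u) u)
    (hdepth : ∀ u, Reach E s u → u ≠ s → depth u = depth (d u) + 1) :
    ∀ (n : ℕ) (c w : V), depth w ≤ n → Dom E s c w → c ≠ w → depth c < depth w := by
  intro n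
  induction n with
  | zero =>
    intro c w hw hc hne
    have hws : w ≠ s := by
      intro hws
      have hp : IsPath E s w [s] := by rw [hws]; exact isPath_singleton
      have := hc.2 [s] hp
      simp at this
      exact hne (this.trans hws.symm)
    have := hdepth w hc.1 hws
    omega
  | succ n ih =>
    intro c w hw hc hne
    have hws : w ≠ s := by
      intro hws
      have hp : IsPath E s w [s] := by rw [hws]; exact isPath_singleton
      have := hc.2 [s] hp
      simp at this
      exact hne (this.trans hws.symm)
    have hdw := hdepth w hc.1 hws
    have hidom := hd w hc.1 hws
    by_cases hcd : c = d w
    · rw [hcd]; omega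
    · have hcdw : Dom E s c (d w) := hidom.2.2 c hc hne
      have := ih c (d w) (by omega) hcdw hcd
      omega

end DelAux

/-- After deleting edge `(x, y)`, with `x` reachable and `y` still reachable in `G'`,
every affected vertex `v` satisfies `d v = d y` and admits a path from `y` to `v` in `G`
all of whose vertices have depth greater than `depth (d v)` in the dominator tree of `G`. -/
theorem deletion_affected_reachable (E : V → V → Prop) (s x y : V)
    (d d' : V → V) (depth : V → ℕ)
    (hd : ∀ u, Reach E s u → u ≠ s → IsIdom E s (d u) u)
    (hd' : ∀ u, Reach (fun p q => E p q ∧ ¬ (p = x ∧ q = y)) s u → u ≠ s →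
      IsIdom (fun p q => E p q ∧ ¬ (p = x ∧ q = y)) s (d' u) u)
    (hdepth0 : depth s = 0)
    (hdepth : ∀ u, Reach E s u → u ≠ s → depth u = depth (d u) + 1)
    (hx : Reach (fun p q => E p q ∧ ¬ (p = x ∧ q = y)) s x)
    (hy : Reach (fun p q => E p q ∧ ¬ (p = x ∧ q = y)) s y)
    (v : V) (hv : Reach (fun p q => E p q ∧ ¬ (p = x ∧ q = y)) s v) (hvs : v ≠ s)
    (haff : d' v ≠ d v) :
    d v = d y ∧ ∃ p, IsPath E y v p ∧ ∀ w ∈ p, depth (d v) < depth w := by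
  classical
  set E' : V → V → Prop := fun p q => E p q ∧ ¬ (p = x ∧ q = y) with hE'def
  have hE' : ∀ a b, E' a b → E a b := fun a b h => h.1
  have hvE : Reach E s v := by obtain ⟨p, hp⟩ := hv; exact ⟨p, DelAux.isPath_mono hE' hp⟩
  have hcv := hd v hvE hvs
  have hIv' := hd' v hv hvs
  have hDom'cv : Dom E' s (d v) v := DelAux.dom_restrict hE' hcv.2.1 hv
  have hReach'c : Reach E' s (d v) := DelAux.dom_reach hDom'cv
  have hDom'cu : Dom E' s (d v) (d' v) := hIv'.2.2 (d v) hDom'cv hcv.1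
  have hDom'uv : Dom E' s (d' v) v := hIv'.2.1
  have hnotDomuv : ¬ Dom E s (d' v) v := by
    intro h
    have h2 : Dom E s (d' v) (d v) := hcv.2.2 _ h hIv'.1
    have h3 : Dom E' s (d' v) (d v) := DelAux.dom_restrict hE' h2 hReach'c
    exact haff (DelAux.mutual_dom h3 hDom'cu)
  obtain ⟨P, hP, huP⟩ : ∃ P, IsPath E s v P ∧ d' v ∉ P := by
    by_contra h
    push_neg at h
    exact hnotDomuv ⟨hvE, fun p hp => h p hp⟩
  have hPnc : ¬ List.Chain' E' P := fun hc => huP (hDom'uv.2 P ⟨hc, hP.2.1, hP.2.2⟩)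
  have hyPt : y ∈ P.tail := by
    by_contra h
    exact hPnc ((DelAux.isPath_avoid hP h).1)
  have hyP : y ∈ P := List.mem_of_mem_tail hyPt
  obtain ⟨Q, R, hPQR, hyR⟩ := DelAux.last_split hyP
  have hP2 : IsPath E y v (y :: R) := (DelAux.isPath_split (hPQR ▸ hP)).2
  have hP2' : IsPath E' y v (y :: R) := DelAux.isPath_avoid hP2 (by simpa using hyR)
  have hsubP2 : ∀ z, z ∈ (y :: R) → z ∈ P := fun z hz => by
    rw [hPQR]; exact List.mem_append_right _ hz
  have huP2 : d' v ∉ (y :: R) := fun h => huP (hsubP2 _ h)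
  have hcP2 : d v ∉ (y :: R) := by
    intro hc
    obtain ⟨σ, τ, hστ, hcτ⟩ := DelAux.last_split hc
    have hsuf : IsPath E' (d v) v (d v :: τ) := (DelAux.isPath_split (hστ ▸ hP2')).2
    have hDom'uc : Dom E' s (d' v) (d v) := by
      refine ⟨hReach'c, fun q hq => ?_⟩
      have hcat := DelAux.isPath_concat hq hsuf
      rcases DelAux.mem_concat (hDom'uv.2 _ hcat) with h | h
      · exact h
      · exact (huP2 (by rw [hστ]; exact List.mem_append_right _ h)).elim
    exact haff (DelAux.mutual_dom hDom'uc hDom'cu)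
  have hkey : ∀ w ∈ (y :: R), Dom E s (d v) w ∧ d v ≠ w := by
    intro w hw
    obtain ⟨σ, τ, hστ, hwτ⟩ := DelAux.last_split hw
    have hsufE : IsPath E w v (w :: τ) := (DelAux.isPath_split (hστ ▸ hP2)).2
    have hprefE : IsPath E y w (σ ++ [w]) := (DelAux.isPath_split (hστ ▸ hP2)).1
    have hwreach : Reach E s w := by
      obtain ⟨py, hpy⟩ := hy
      exact ⟨_, DelAux.isPath_concat (DelAux.isPath_mono hE' hpy) hprefE⟩
    have hcne : d v ≠ w := fun h => hcP2 (h ▸ hw)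
    refine ⟨⟨hwreach, fun q hq => ?_⟩, hcne⟩
    have hcat := DelAux.isPath_concat hq hsufE
    rcases DelAux.mem_concat (hcv.2.1.2 _ hcat) with h | h
    · exact h
    · exact (hcP2 (by rw [hστ]; exact List.mem_append_right _ h)).elim
  have hcy' : Dom E s (d v) y ∧ d v ≠ y := hkey y (by simp)
  have hy_ne_s : y ≠ s := by
    intro h
    have hp : IsPath E s y [s] := by rw [h]; exact DelAux.isPath_singleton
    have := hcy'.1.2 [s] hp
    simp at this
    exact hcy'.2 (this.trans h.symm)
  have hyE : Reach E s y := by obtain ⟨p, hp⟩ := hy; exact ⟨p, DelAux.isPath_mono hE' hp⟩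
  have hIy := hd y hyE hy_ne_s
  have hDomc_dy : Dom E s (d v) (d y) := hIy.2.2 _ hcy'.1 hcy'.2
  have hDom'uy : Dom E' s (d' v) y := by
    refine ⟨hy, fun q hq => ?_⟩
    have hcat := DelAux.isPath_concat hq hP2'
    rcases DelAux.mem_concat (hDom'uv.2 _ hcat) with h | h
    · exact h
    · exact (huP2 h).elim
  obtain ⟨Q₁, R₁, hQR₁, hyQ₁⟩ := DelAux.first_split hyP
  have hP1 : IsPath E s y (Q₁ ++ [y]) := (DelAux.isPath_split (hQR₁ ▸ hP)).1
  have hDom_dy_v : Dom E s (d y) v := by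
    refine ⟨hvE, fun p hp => ?_⟩
    by_cases hyp : y ∈ p
    · obtain ⟨q, r, hqr, -⟩ := DelAux.first_split hyp
      have hmem := hIy.2.1.2 _ (DelAux.isPath_split (hqr ▸ hp)).1
      rw [hqr]
      rcases List.mem_append.1 hmem with h | h
      · exact List.mem_append_left _ h
      · simp at h; rw [h]; exact List.mem_append_right _ (by simp)
    · have hp' : IsPath E' s v p := DelAux.isPath_avoid hp (fun h => hyp (List.mem_of_mem_tail h))
      have hup := hDom'uv.2 _ hp'
      obtain ⟨q, r, hqr, -⟩ := DelAux.first_split hup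
      have hqu : IsPath E' s (d' v) (q ++ [d' v]) := (DelAux.isPath_split (hqr ▸ hp')).1
      have hdy'y : Dom E' s (d y) y := DelAux.dom_restrict hE' hIy.2.1 hy
      rcases DelAux.dom_linear hdy'y hDom'uy with h | h
      · have hm := h.2 _ hqu
        rw [hqr]
        rcases List.mem_append.1 hm with h2 | h2
        · exact List.mem_append_left _ h2
        · simp at h2; rw [h2]; exact List.mem_append_right _ (by simp)
      · exfalso
        have hdyP1 := hIy.2.1.2 _ hP1
        have hdy_ne_y : d y ≠ y := hIy.1
        have hdyQ₁ : d y ∈ Q₁ := by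
          rcases List.mem_append.1 hdyP1 with h2 | h2
          · exact h2
          · simp at h2; exact absurd h2 hdy_ne_y
        obtain ⟨σ, τ, hστ, -⟩ := DelAux.first_split hdyQ₁
        have heq : Q₁ ++ [y] = σ ++ d y :: (τ ++ [y]) := by rw [hστ]; simp
        have hpre : IsPath E s (d y) (σ ++ [d y]) := (DelAux.isPath_split (heq ▸ hP1)).1
        have hynot : y ∉ (σ ++ [d y]).tail := by
          intro hmem
          have hmm : y ∈ σ ++ [d y] := List.mem_of_mem_tail hmem
          rcases List.mem_append.1 hmm with h2 | h2
          · exact hyQ₁ (by rw [hστ]; exact List.mem_append_left _ h2)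
          · simp at h2; exact hdy_ne_y h2.symm
        have hpre' : IsPath E' s (d y) (σ ++ [d y]) := DelAux.isPath_avoid hpre hynot
        have humem := h.2 _ hpre'
        apply huP
        rw [hQR₁]
        apply List.mem_append_left
        rw [hστ]
        rcases List.mem_append.1 humem with h2 | h2
        · exact List.mem_append_left _ h2
        · simp at h2; rw [h2]; exact List.mem_append_right _ (by simp)
  have hdy_ne_v : d y ≠ v := by
    intro h
    have hDomvy : Dom E s v y := h ▸ hIy.2.1
    have hvP1 := hDomvy.2 _ hP1
    have hv_ne_y : v ≠ y := fun hvy => hIy.1 (h.trans hvy)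
    have hvQ₁ : v ∈ Q₁ := by
      rcases List.mem_append.1 hvP1 with h2 | h2
      · exact h2
      · simp at h2; exact absurd h2 hv_ne_y
    obtain ⟨σ, τ, hστ, -⟩ := DelAux.first_split hvQ₁
    have heq : Q₁ ++ [y] = σ ++ v :: (τ ++ [y]) := by rw [hστ]; simp
    have hpre : IsPath E s v (σ ++ [v]) := (DelAux.isPath_split (heq ▸ hP1)).1
    have hynot : y ∉ (σ ++ [v]).tail := by
      intro hmem
      have hmm : y ∈ σ ++ [v] := List.mem_of_mem_tail hmem
      rcases List.mem_append.1 hmm with h2 | h2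
      · exact hyQ₁ (by rw [hστ]; exact List.mem_append_left _ h2)
      · simp at h2; exact hv_ne_y h2.symm
    have hpre' : IsPath E' s v (σ ++ [v]) := DelAux.isPath_avoid hpre hynot
    have humem := hDom'uv.2 _ hpre'
    apply huP
    rw [hQR₁]
    apply List.mem_append_left
    rw [hστ]
    rcases List.mem_append.1 humem with h2 | h2
    · exact List.mem_append_left _ h2
    · simp at h2; rw [h2]; exact List.mem_append_right _ (by simp)
  have hDom_dy_c : Dom E s (d y) (d v) := hcv.2.2 _ hDom_dy_v hdy_ne_v
  have hc_eq : d v = d y := DelAux.mutual_dom hDomc_dy hDom_dy_c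
  refine ⟨hc_eq, ⟨y :: R, hP2, fun w hw => ?_⟩⟩
  obtain ⟨hdom, hne⟩ := hkey w hw
  exact DelAux.depth_lt d depth hd hdepth (depth w) (d v) w le_rfl hdom hne
end

section
/- Let G' be obtained from flow graph G by deleting edge (x, y), where x is reachable in G' and y becomes unreachable in G'. If a vertex v is affected (v is reachable in G' and d'(v) ≠ d(v)), then there is a path from y to v in G on which every vertex w satisfies depth(w) > depth(d(v)) in the dominator tree D of G. -/
variable {V : Type*}

lemma aux_exists_last_split {P : V → Prop} {l : List V} (h : ∃ a ∈ l, P a) :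
    ∃ l₁ a l₂, l = l₁ ++ a :: l₂ ∧ P a ∧ ∀ b ∈ l₂, ¬ P b := by
  classical
  induction l with
  | nil => simp at h
  | cons c t ih =>
    by_cases h' : ∃ a ∈ t, P a
    · obtain ⟨l₁, a, l₂, rfl, hPa, hl₂⟩ := ih h'
      exact ⟨c :: l₁, a, l₂, rfl, hPa, hl₂⟩
    · obtain ⟨a, ha, hPa⟩ := h
      rcases List.mem_cons.1 ha with rfl | hat
      · exact ⟨[], a, t, rfl, hPa, fun b hb hPb => h' ⟨b, hb, hPb⟩⟩
      · exact absurd ⟨a, hat, hPa⟩ h'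

lemma aux_path_mono {E₁ E₂ : V → V → Prop} (h : ∀ a b, E₁ a b → E₂ a b) {a b : V} {p : List V}
    (hp : IsPath E₁ a b p) : IsPath E₂ a b p :=
  ⟨List.IsChain.imp h hp.1, hp.2⟩

lemma aux_path_prefix {E : V → V → Prop} {s b : V} {p : List V} (hp : IsPath E s b p) {a : V}
    (ha : a ∈ p) : ∃ q, IsPath E s a q ∧ (a ≠ b → q.length < p.length) := by
  obtain ⟨l₁, l₂, rfl⟩ := List.append_of_mem ha
  refine ⟨l₁ ++ [a], ⟨hp.1.prefix ⟨l₂, by simp⟩, ?_, List.getLast?_concat⟩, ?_⟩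
  · have : (l₁ ++ [a]).head? = (l₁ ++ a :: l₂).head? := by cases l₁ <;> simp
    rw [this]; exact hp.2.1
  · intro hne
    have hl₂ne : l₂ ≠ [] := by
      rintro rfl
      have := hp.2.2
      rw [List.getLast?_concat] at this
      exact hne (Option.some_injective _ this)
    have : 1 ≤ l₂.length := List.length_pos_iff.2 hl₂ne
    simp [List.length_append]; omega

lemma aux_reach_of_dom {E : V → V → Prop} {s w u : V} (hdom : Dom E s w u) (hu : Reach E s u) :
    Reach E s w := by
  obtain ⟨p, hp⟩ := hu
  obtain ⟨q, hq, -⟩ := aux_path_prefix hp (hdom.2 p hp)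
  exact ⟨q, hq⟩

lemma aux_mutual {E₁ E₂ : V → V → Prop} {s a b : V} (hsub : ∀ a b, E₁ a b → E₂ a b)
    (hab : ∀ p, IsPath E₁ s b p → a ∈ p) (hba : ∀ p, IsPath E₂ s a p → b ∈ p)
    (hr : Reach E₁ s b) : a = b := by
  obtain ⟨p, hp⟩ := hr
  suffices H : ∀ n, ∀ p : List V, p.length ≤ n → IsPath E₁ s b p → a = b from
    H p.length p le_rfl hp
  intro n
  induction n with
  | zero =>
    intro p hl hp
    rw [List.length_eq_zero_iff.1 (Nat.le_zero.1 hl)] at hp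
    simp [IsPath] at hp
  | succ n ih =>
    intro p hl hp
    by_contra hne
    obtain ⟨q, hq, hql⟩ := aux_path_prefix hp (hab p hp)
    obtain ⟨r, hr2, hrl⟩ := aux_path_prefix hq (hba q (aux_path_mono hsub hq))
    have hba' : b ≠ a := fun h => hne h.symm
    exact hne (ih r (by have := hql hne; have := hrl hba'; omega) hr2)

lemma aux_dom_depth_lt {E : V → V → Prop} {s : V} {d : V → V} {depth : V → ℕ}
    (hd : ∀ u, Reach E s u → u ≠ s → IsIdom E s (d u) u)
    (hdepth : ∀ u, Reach E s u → u ≠ s → depth u = depth (d u) + 1)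
    {a u : V} (hu : Reach E s u) (hdom : Dom E s a u) (hne : a ≠ u) : depth a < depth u := by
  suffices H : ∀ n u, depth u ≤ n → Reach E s u → Dom E s a u → a ≠ u → depth a < depth u from
    H (depth u) u le_rfl hu hdom hne
  clear hu hdom hne
  intro n
  induction n with
  | zero =>
    intro u hl hu hdom hne
    by_cases hus : u = s
    · have hpath : IsPath E s u [u] := ⟨List.isChain_singleton u, by simp [hus], by simp [hus]⟩
      have := hdom.2 [u] hpath
      simp at this
      exact absurd this hne
    · have := hdepth u hu hus; omega
  | succ n ih =>
    intro u hl hu hdom hne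
    by_cases hus : u = s
    · have hpath : IsPath E s u [u] := ⟨List.isChain_singleton u, by simp [hus], by simp [hus]⟩
      have := hdom.2 [u] hpath
      simp at this
      exact absurd this hne
    · have hidom := hd u hu hus
      have hdu := hidom.2.2 a hdom hne
      have hdep := hdepth u hu hus
      by_cases hadu : a = d u
      · rw [hadu]; omega
      · have hrdu : Reach E s (d u) := aux_reach_of_dom hidom.2.1 hu
        have := ih (d u) (by omega) hrdu hdu hadu
        omega

lemma aux_chain'_strengthen {E₁ E₂ : V → V → Prop} :
    ∀ {p : List V}, p.Chain' E₁ → (∀ a b, b ∈ p.tail → E₁ a b → E₂ a b) → p.Chain' E₂ := by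
  intro p
  induction p with
  | nil => intro _ _; exact List.isChain_nil
  | cons c t ih =>
    intro h1 h2
    cases t with
    | nil => exact List.isChain_singleton c
    | cons z t' =>
      simp only [List.Chain', List.isChain_cons_cons] at h1 ⊢
      refine ⟨h2 c z (by simp) h1.1, ih h1.2 ?_⟩
      intro a b hb hE
      exact h2 a b (List.mem_cons_of_mem _ hb) hE

lemma aux_path_suffix {E : V → V → Prop} {s v w : V} {P₁ P₂ : List V}
    (hp : IsPath E s v (P₁ ++ w :: P₂)) : IsPath E w v (w :: P₂) := by
  refine ⟨hp.1.suffix ⟨P₁, rfl⟩, rfl, ?_⟩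
  have h2 := hp.2.2
  rw [List.getLast?_append] at h2
  cases hz : (w :: P₂).getLast? with
  | none => simp at hz
  | some z => rw [hz] at h2; simpa using h2

lemma aux_path_append {E : V → V → Prop} {s w v : V} {R Q₂ : List V}
    (hR : IsPath E s w R) (hQ : IsPath E w v (w :: Q₂)) (hne : Q₂ ≠ []) :
    IsPath E s v (R ++ Q₂) := by
  cases Q₂ with
  | nil => exact absurd rfl hne
  | cons z t =>
    have hEwz : E w z := (List.isChain_cons_cons.1 hQ.1).1
    refine ⟨?_, ?_, ?_⟩
    · refine List.isChain_append.2 ⟨hR.1, (List.isChain_cons_cons.1 hQ.1).2, ?_⟩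
      intro p hp q hq
      rw [hR.2.2] at hp
      simp at hp hq
      rw [← hp, ← hq]
      exact hEwz
    · have hRne : R ≠ [] := by
        intro h; rw [h] at hR; simp [IsPath] at hR
      cases R with
      | nil => exact absurd rfl hRne
      | cons c t' => simpa using hR.2.1
    · rw [List.getLast?_append]
      have := hQ.2.2
      rw [List.getLast?_cons_cons] at this
      rw [this]
      rfl

/-- After deleting edge `(x, y)`, with `x` reachable in `G'` and `y` unreachable in `G'`,
every affected vertex `v` admits a path from `y` to `v` in `G` all of whose vertices
have depth greater than `depth (d v)` in the dominator tree of `G`. -/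
theorem deletion_affected_unreachable (E : V → V → Prop) (s x y : V)
    (d d' : V → V) (depth : V → ℕ)
    (hd : ∀ u, Reach E s u → u ≠ s → IsIdom E s (d u) u)
    (hd' : ∀ u, Reach (fun p q => E p q ∧ ¬ (p = x ∧ q = y)) s u → u ≠ s →
      IsIdom (fun p q => E p q ∧ ¬ (p = x ∧ q = y)) s (d' u) u)
    (hdepth0 : depth s = 0)
    (hdepth : ∀ u, Reach E s u → u ≠ s → depth u = depth (d u) + 1)
    (hx : Reach (fun p q => E p q ∧ ¬ (p = x ∧ q = y)) s x)
    (hy : ¬ Reach (fun p q => E p q ∧ ¬ (p = x ∧ q = y)) s y)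
    (v : V) (hv : Reach (fun p q => E p q ∧ ¬ (p = x ∧ q = y)) s v) (hvs : v ≠ s)
    (haff : d' v ≠ d v) :
    ∃ p, IsPath E y v p ∧ ∀ w ∈ p, depth (d v) < depth w := by
  classical
  set E' : V → V → Prop := fun p q => E p q ∧ ¬ (p = x ∧ q = y) with hE'
  have hsub : ∀ a b, E' a b → E a b := fun a b h => h.1
  obtain ⟨p0, hp0⟩ := hv
  have hrv : Reach E s v := ⟨p0, aux_path_mono hsub hp0⟩
  have hv' : Reach E' s v := ⟨p0, hp0⟩
  have hidomv := hd v hrv hvs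
  have hidomv' := hd' v hv' hvs
  have hdvv : d v ≠ v := hidomv.1
  have hdomv : Dom E s (d v) v := hidomv.2.1
  have hdomv' : Dom E' s (d' v) v := hidomv'.2.1
  have hdomE' : Dom E' s (d v) v := ⟨hv', fun p hp => hdomv.2 p (aux_path_mono hsub hp)⟩
  have hdvdv' : Dom E' s (d v) (d' v) := hidomv'.2.2 (d v) hdomE' hdvv
  have hrd'v : Reach E' s (d' v) := hdvdv'.1
  -- Step 1: d' v does not dominate v in G
  have hnd : ¬ Dom E s (d' v) v := by
    intro hdom
    have h3 : Dom E s (d' v) (d v) := hidomv.2.2 (d' v) hdom hidomv'.1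
    exact haff (aux_mutual hsub hdvdv'.2 h3.2 hrd'v).symm
  -- Get a G-path P from s to v avoiding d' v
  have hP : ∃ p, IsPath E s v p ∧ d' v ∉ p := by
    by_contra h
    push_neg at h
    exact hnd ⟨hrv, h⟩
  obtain ⟨P, hPpath, hPd'⟩ := hP
  -- y must be on P
  have hyP : y ∈ P := by
    by_contra hyP
    have hPE' : IsPath E' s v P := by
      refine ⟨aux_chain'_strengthen hPpath.1 ?_, hPpath.2⟩
      intro a b hb hE
      exact ⟨hE, fun h => hyP (h.2 ▸ List.mem_of_mem_tail hb)⟩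
    exact hPd' (hdomv'.2 P hPE')
  -- split P at the last occurrence of y
  obtain ⟨P₁, y', P₂, heq, hy', hP₂⟩ :=
    aux_exists_last_split (P := (y = ·)) ⟨y, hyP, rfl⟩
  subst hy'
  subst heq
  have hQpath : IsPath E y v (y :: P₂) := aux_path_suffix hPpath
  have hQchain' : (y :: P₂).Chain' E' := by
    refine aux_chain'_strengthen hQpath.1 ?_
    intro a b hb hE
    exact ⟨hE, fun h => hP₂ b hb h.2.symm⟩
  refine ⟨y :: P₂, hQpath, ?_⟩
  by_contra hcon
  push_neg at hcon
  obtain ⟨Q₁, w, Q₂, heq2, hwdep, hQ₂⟩ :=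
    aux_exists_last_split (P := fun b => depth b ≤ depth (d v)) hcon
  have hQpath2 := hQpath
  rw [heq2] at hQpath2
  have hQ'path : IsPath E w v (w :: Q₂) := aux_path_suffix hQpath2
  have hQ'chain' : (w :: Q₂).Chain' E' := hQchain'.suffix ⟨Q₁, heq2.symm⟩
  have hQ'pathE' : IsPath E' w v (w :: Q₂) := ⟨hQ'chain', rfl, hQ'path.2.2⟩
  have hdepv : depth v = depth (d v) + 1 := hdepth v hrv hvs
  have hQ₂ne : Q₂ ≠ [] := by
    rintro rfl
    have hwv : w = v := by simpa [IsPath] using hQ'path.2.2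
    rw [hwv] at hwdep
    omega
  have hd'Q' : d' v ∉ (w :: Q₂) := by
    intro h
    apply hPd'
    have : d' v ∈ Q₁ ++ w :: Q₂ := List.mem_append.2 (Or.inr h)
    rw [← heq2] at this
    exact List.mem_append.2 (Or.inr this)
  by_cases hwdv : w = d v
  · -- w = d v : mutual domination of d v and d' v in G', contradiction
    have hrdv' : Reach E' s (d v) := aux_reach_of_dom hdomE' hv'
    have hdomw : Dom E' s (d' v) (d v) := by
      refine ⟨hrdv', ?_⟩
      intro R hR
      have hRw : IsPath E' s w R := by rw [hwdv]; exact hR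
      have hcat : IsPath E' s v (R ++ Q₂) := aux_path_append hRw hQ'pathE' hQ₂ne
      rcases List.mem_append.1 (hdomv'.2 _ hcat) with h | h
      · exact h
      · exact absurd (List.mem_cons_of_mem _ h) hd'Q'
    exact haff (aux_mutual (fun a b h => h) hdomw.2 hdvdv'.2 hrdv')
  · -- w ≠ d v : d v dominates w in G, so depth (d v) < depth w, contradiction
    have hwP : w ∈ P₁ ++ y :: P₂ := by
      have : w ∈ Q₁ ++ w :: Q₂ := List.mem_append.2 (Or.inr List.mem_cons_self)
      rw [← heq2] at this
      exact List.mem_append.2 (Or.inr this)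
    have hrw : Reach E s w := by
      obtain ⟨q, hq, -⟩ := aux_path_prefix hPpath hwP
      exact ⟨q, hq⟩
    have hdomw : Dom E s (d v) w := by
      refine ⟨hrw, ?_⟩
      intro R hR
      have hcat : IsPath E s v (R ++ Q₂) := aux_path_append hR hQ'path hQ₂ne
      rcases List.mem_append.1 (hdomv.2 _ hcat) with h | h
      · exact h
      · exact absurd le_rfl (hQ₂ _ h)
    have := aux_dom_depth_lt hd hdepth hrw hdomw (fun h => hwdv h.symm)
    omega
end

section
/- For each n ≥ 3, consider the flow graph G_n on vertices v_0 = s, v_1, ..., v_{n-1} whose edges are (v_{i-1}, v_i) for 1 ≤ i ≤ n−1 together with (v_i, v_{i-1}) for 3 ≤ i ≤ n−1. In G_n, the immediate dominator of v_i is v_{i-1} for all 1 ≤ i ≤ n−1, while in G_n + (s, v_{n-1}) the immediate dominator of v_i is s for all 2 ≤ i ≤ n−1. Hence inserting the single edge (s, v_{n-1}) changes the immediate dominator of n − 2 vertices. -/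
variable {V : Type*}

/-- The pathological graph of Figure 1: vertices `0, …, n-1` with start vertex `0`,
edges `(i-1, i)` for `1 ≤ i ≤ n-1` and `(i, i-1)` for `3 ≤ i ≤ n-1`. -/
def pathoE (n : ℕ) : ℕ → ℕ → Prop := fun a b =>
  (b = a + 1 ∧ 1 ≤ b ∧ b ≤ n - 1) ∨ (3 ≤ a ∧ a ≤ n - 1 ∧ b = a - 1)



section PathoAux

lemma patho_head_mem {α : Type*} {p : List α} {a : α} (h : p.head? = some a) : a ∈ p := by
  cases p with
  | nil => simp at h
  | cons x q => rw [List.head?_cons, Option.some_inj] at h; simp [h]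

-- paste aux here

/-- Discrete intermediate value theorem for ±1 walks on ℕ. -/
lemma patho_ivt : ∀ (p : List ℕ) (a c j : ℕ),
    p.Chain' (fun a b => b = a + 1 ∨ a = b + 1) →
    p.head? = some a → p.getLast? = some c → a ≤ j → j ≤ c → j ∈ p := by
  intro p
  induction p with
  | nil => intro a c j _ ha; simp at ha
  | cons x q ih =>
    intro a c j hch ha hc h1 h2
    rw [List.head?_cons, Option.some_inj] at ha
    subst ha
    cases q with
    | nil =>
      simp only [List.getLast?_singleton, Option.some_inj] at hc
      have : j = x := by omega
      simp [this]
    | cons y r =>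
      unfold List.Chain' at hch; rw [List.isChain_cons_cons] at hch
      rw [List.getLast?_cons_cons] at hc
      by_cases hj : j = x
      · simp [hj]
      · have hy : y ≤ j := by rcases hch.1 with h | h <;> omega
        have := ih y c j hch.2 (List.head?_cons) hc hy h2
        exact List.mem_cons_of_mem _ this

lemma patho_chain'_range' (R : ℕ → ℕ → Prop) :
    ∀ (m s : ℕ), (∀ k, s ≤ k → k + 1 < s + m → R k (k + 1)) →
    (List.range' s m).Chain' R := by
  intro m
  induction m with
  | zero => intro s _; exact List.isChain_nil
  | succ m ih =>
    intro s h
    unfold List.Chain'; rw [List.range'_succ, List.isChain_cons]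
    refine ⟨?_, ih (s + 1) (fun k hk hk2 => h k (by omega) (by omega))⟩
    intro y hy
    cases m with
    | zero => simp at hy
    | succ m =>
      rw [List.range'_succ, List.head?_cons, Option.mem_def, Option.some_inj] at hy
      subst hy
      exact h s le_rfl (by omega)


section Patho

def pathoE' (n : ℕ) : ℕ → ℕ → Prop := fun a b => pathoE n a b ∨ (a = 0 ∧ b = n - 1)

lemma patho_forward (E : ℕ → ℕ → Prop) (n i : ℕ) (hn : 3 ≤ n) (hi : i ≤ n - 1)
    (hE : ∀ k, k + 1 ≤ n - 1 → E k (k + 1)) :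
    (List.range' 0 (i + 1)).Chain' E ∧ (List.range' 0 (i + 1)).head? = some 0 ∧
    (List.range' 0 (i + 1)).getLast? = some i := by
  refine ⟨?_, ?_, ?_⟩
  · exact patho_chain'_range' E (i + 1) 0 (fun k hk hk2 => hE k (by omega))
  · rw [List.range'_succ, List.head?_cons]
  · rw [List.range'_concat, List.getLast?_concat]; norm_num

lemma patho_backward (n i : ℕ) (hn : 3 ≤ n) (h2 : 2 ≤ i) (hi : i ≤ n - 1) :
    ((List.range' i (n - i)) ++ [0]).reverse.Chain' (pathoE' n) ∧
    ((List.range' i (n - i)) ++ [0]).reverse.head? = some 0 ∧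
    ((List.range' i (n - i)) ++ [0]).reverse.getLast? = some i := by
  have hm : n - i = (n - i - 1) + 1 := by omega
  refine ⟨?_, ?_, ?_⟩
  · unfold List.Chain'; rw [List.isChain_reverse, List.isChain_append]
    refine ⟨?_, List.isChain_singleton 0, ?_⟩
    · apply patho_chain'_range'
      intro k hk hk2
      show pathoE' n (k + 1) k
      exact Or.inl (Or.inr ⟨by omega, by omega, by omega⟩)
    · intro x hx y hy
      rw [hm, List.range'_concat, List.getLast?_concat, Option.mem_def, Option.some_inj] at hx
      rw [List.head?_cons, Option.mem_def, Option.some_inj] at hy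
      subst hx; subst hy
      show pathoE' n 0 (i + 1 * (n - i - 1))
      have : i + 1 * (n - i - 1) = n - 1 := by omega
      rw [this]
      exact Or.inr ⟨rfl, rfl⟩
  · rw [List.head?_reverse, List.getLast?_concat]
  · rw [List.getLast?_reverse, hm, List.range'_succ, List.cons_append, List.head?_cons]

end Patho

lemma patho_step (n : ℕ) : ∀ a b, pathoE n a b → b = a + 1 ∨ a = b + 1 := by
  intro a b h
  simp only [pathoE] at h
  omega

/-- In `G_n` the immediate dominator of `v_i` is `v_{i-1}` for all `1 ≤ i ≤ n-1`;
after inserting the edge `(s, v_{n-1})`, the immediate dominator of `v_i` is `s`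
for all `2 ≤ i ≤ n-1`; hence the insertion changes the immediate dominator
of `n - 2` vertices. -/
theorem pathological_insertion (n : ℕ) (hn : 3 ≤ n) :
    (∀ i, 1 ≤ i → i ≤ n - 1 → IsIdom (pathoE n) 0 (i - 1) i) ∧
    (∀ i, 2 ≤ i → i ≤ n - 1 →
      IsIdom (fun a b => pathoE n a b ∨ (a = 0 ∧ b = n - 1)) 0 0 i) ∧
    (Finset.Icc 2 (n - 1)).card = n - 2 := by
  refine ⟨?_, ?_, ?_⟩
  · -- Part 1
    intro i h1 h2
    obtain ⟨hc, hh, hl⟩ := patho_forward (pathoE n) n i hn h2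
      (fun k hk => Or.inl ⟨rfl, by omega, hk⟩)
    have fpath : IsPath (pathoE n) 0 i (List.range' 0 (i + 1)) := ⟨hc, hh, hl⟩
    refine ⟨by omega, ⟨⟨_, fpath⟩, ?_⟩, ?_⟩
    · intro p hp
      exact patho_ivt p 0 i (i - 1) (hp.1.imp (patho_step n)) hp.2.1 hp.2.2
        (by omega) (by omega)
    · intro u hu hune
      have humem := hu.2 _ fpath
      rw [List.mem_range'_1] at humem
      have hule : u ≤ i - 1 := by omega
      obtain ⟨hc', hh', hl'⟩ := patho_forward (pathoE n) n (i - 1) hn (by omega)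
        (fun k hk => Or.inl ⟨rfl, by omega, hk⟩)
      refine ⟨⟨_, hc', hh', hl'⟩, ?_⟩
      intro p hp
      exact patho_ivt p 0 (i - 1) u (hp.1.imp (patho_step n)) hp.2.1 hp.2.2
        (by omega) hule
  · -- Part 2
    intro i h2 h1
    show IsIdom (pathoE' n) 0 0 i
    obtain ⟨hc, hh, hl⟩ := patho_forward (pathoE' n) n i hn h1
      (fun k hk => Or.inl (Or.inl ⟨rfl, by omega, hk⟩))
    have fpath : IsPath (pathoE' n) 0 i (List.range' 0 (i + 1)) := ⟨hc, hh, hl⟩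
    refine ⟨by omega, ⟨⟨_, fpath⟩, fun p hp => patho_head_mem hp.2.1⟩, ?_⟩
    intro u hu hune
    have hu1 := hu.2 _ fpath
    rw [List.mem_range'_1] at hu1
    obtain ⟨bc, bh, bl⟩ := patho_backward n i hn h2 h1
    have hu2 := hu.2 _ ⟨bc, bh, bl⟩
    rw [List.mem_reverse, List.mem_append, List.mem_range'_1] at hu2
    have hu0 : u = 0 := by
      rcases hu2 with h | h
      · omega
      · simp at h; omega
    subst hu0
    exact ⟨⟨[0], List.isChain_singleton 0, rfl, rfl⟩, fun p hp => patho_head_mem hp.2.1⟩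
  · rw [Nat.card_Icc]; omega

end PathoAux
end
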